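/- Define m₁/₂ : ℝ → ℝ by m₁/₂(x) = Real.sqrt (Real.tanh x * (1 + x²/2) / x) for x ≠ 0 and m₁/₂(0) = 1. Then Set.range m₁/₂ = Set.Ici 1, i.e., the range of m₁/₂ is exactly the interval [1, ∞). -/

import Mathlib

open Real Set Filter Topology

noncomputable def whithamG (x : ℝ) : ℝ := Real.tanh x * (1 + x ^ 2 / 2) / x

lemma whithamG_neg (x : ℝ) : whithamG (-x) = whithamG x := by
  unfold whithamG
  rcases eq_or_ne x 0 with rfl | hx
  · simp
  · rw [Real.tanh_neg]
    field_simp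

lemma hasDerivAt_hh (x : ℝ) :
    HasDerivAt (fun x => Real.sinh x * (1 + x ^ 2 / 2) - x * Real.cosh x)
      (Real.cosh x * (x ^ 2 / 2)) x := by
  have h1 : HasDerivAt (fun x : ℝ => Real.sinh x * (1 + x ^ 2 / 2))
      (Real.cosh x * (1 + x ^ 2 / 2) + Real.sinh x * x) x := by
    have := (Real.hasDerivAt_sinh x).mul
      (((hasDerivAt_pow 2 x).div_const 2).const_add 1)
    exact this.congr_deriv (by simp)
  have h2 : HasDerivAt (fun x : ℝ => x * Real.cosh x)
      (Real.cosh x + x * Real.sinh x) x := by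
    have := (hasDerivAt_id x).mul (Real.hasDerivAt_cosh x)
    exact this.congr_deriv (by simp [id_eq])
  have := h1.sub h2
  exact this.congr_deriv (by ring)

lemma hh_nonneg {x : ℝ} (hx : 0 ≤ x) :
    0 ≤ Real.sinh x * (1 + x ^ 2 / 2) - x * Real.cosh x := by
  have hmono : Monotone (fun x => Real.sinh x * (1 + x ^ 2 / 2) - x * Real.cosh x) := by
    apply monotone_of_deriv_nonneg
    · exact fun x => (hasDerivAt_hh x).differentiableAt
    · intro x
      rw [(hasDerivAt_hh x).deriv]
      positivity
  have := hmono hx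
  simpa using this

lemma one_le_whithamG_pos {x : ℝ} (hx : 0 < x) : 1 ≤ whithamG x := by
  unfold whithamG
  rw [le_div_iff₀ hx, one_mul, Real.tanh_eq_sinh_div_cosh, div_mul_eq_mul_div,
    le_div_iff₀ (Real.cosh_pos x)]
  nlinarith [hh_nonneg hx.le]

lemma one_le_whithamG {x : ℝ} (hx : x ≠ 0) : 1 ≤ whithamG x := by
  rcases lt_or_gt_of_ne hx with h | h
  · rw [← whithamG_neg]
    exact one_le_whithamG_pos (by linarith)
  · exact one_le_whithamG_pos h

lemma tendsto_whithamG : Tendsto whithamG (𝓝[≠] (0 : ℝ)) (𝓝 1) := by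
  have hslope : Tendsto (slope Real.sinh 0) (𝓝[≠] (0 : ℝ)) (𝓝 1) := by
    have := (hasDerivAt_iff_tendsto_slope).mp (Real.hasDerivAt_sinh 0)
    simpa using this
  have hG : Tendsto (fun x : ℝ => slope Real.sinh 0 x * (1 + x ^ 2 / 2) / Real.cosh x)
      (𝓝[≠] (0 : ℝ)) (𝓝 1) := by
    have h2 : Tendsto (fun x : ℝ => (1 + x ^ 2 / 2) / Real.cosh x) (𝓝[≠] (0 : ℝ)) (𝓝 1) := by
      have : ContinuousAt (fun x : ℝ => (1 + x ^ 2 / 2) / Real.cosh x) 0 := by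
        apply ContinuousAt.div
        · fun_prop
        · fun_prop
        · exact (Real.cosh_pos 0).ne'
      have := this.continuousWithinAt (s := {(0:ℝ)}ᶜ)
      simpa [ContinuousWithinAt] using this
    have := hslope.mul h2
    simpa [mul_div_assoc] using this
  apply hG.congr'
  filter_upwards [self_mem_nhdsWithin] with x hx
  have hx' : (x : ℝ) ≠ 0 := hx
  rw [slope_def_field]
  unfold whithamG
  rw [Real.tanh_eq_sinh_div_cosh]
  have hc := (Real.cosh_pos x).ne'
  field_simp
  simp

noncomputable def whithamF (x : ℝ) : ℝ :=
  if x = 0 then (1 : ℝ) else Real.sqrt (Real.tanh x * (1 + x ^ 2 / 2) / x)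

lemma whithamF_eq {x : ℝ} (hx : x ≠ 0) : whithamF x = Real.sqrt (whithamG x) := by
  simp [whithamF, whithamG, hx]

lemma continuous_whithamF : Continuous whithamF := by
  rw [continuous_iff_continuousAt]
  intro x
  rcases eq_or_ne x 0 with rfl | hx
  · rw [ContinuousAt]
    have h0 : whithamF 0 = 1 := by simp [whithamF]
    rw [h0, ← nhdsNE_sup_pure, tendsto_sup]
    constructor
    · have hsq := Real.continuous_sqrt.tendsto 1
      rw [Real.sqrt_one] at hsq
      have := hsq.comp tendsto_whithamG
      apply this.congr'
      filter_upwards [self_mem_nhdsWithin] with y hy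
      exact (whithamF_eq hy).symm
    · simpa [h0] using tendsto_pure_nhds whithamF 0
  · have hG : ContinuousAt (fun y => Real.sqrt (whithamG y)) x := by
      apply Real.continuous_sqrt.continuousAt.comp
      unfold whithamG
      apply ContinuousAt.div
      · have htanh : Continuous Real.tanh := by
          rw [show Real.tanh = fun x => Real.sinh x / Real.cosh x from
            funext Real.tanh_eq_sinh_div_cosh]
          exact Real.continuous_sinh.div Real.continuous_cosh fun x => (Real.cosh_pos x).ne'
        exact (htanh.mul (by fun_prop)).continuousAt
      · fun_prop
      · exact hx
    apply hG.congr
    filter_upwards [isOpen_ne.mem_nhds hx] with y hy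
    exact (whithamF_eq hy).symm

lemma tanh_ge_half {x : ℝ} (hx : 1 ≤ x) : 1 / 2 ≤ Real.tanh x := by
  rw [Real.tanh_eq_sinh_div_cosh, le_div_iff₀ (Real.cosh_pos x)]
  rw [Real.sinh_eq, Real.cosh_eq]
  have h1 : (3 : ℝ) ≤ Real.exp (2 * x) := by
    have := Real.add_one_le_exp (2 * x)
    linarith
  have h2 : Real.exp (2 * x) = Real.exp x * Real.exp x := by
    rw [← Real.exp_add]; ring_nf
  have h3 : 0 < Real.exp (-x) := Real.exp_pos _
  have h4 : Real.exp (-x) * Real.exp x = 1 := by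
    rw [← Real.exp_add]; simp
  nlinarith

theorem range_whitham_symbol :
    Set.range (fun x : ℝ =>
        if x = 0 then (1 : ℝ) else Real.sqrt (Real.tanh x * (1 + x ^ 2 / 2) / x))
      = Set.Ici 1 := by
  have hrange : (fun x : ℝ =>
      if x = 0 then (1 : ℝ) else Real.sqrt (Real.tanh x * (1 + x ^ 2 / 2) / x)) = whithamF :=
    rfl
  rw [hrange]
  apply Set.Subset.antisymm
  · rintro y ⟨x, rfl⟩
    rcases eq_or_ne x 0 with rfl | hx
    · simp [whithamF]
    · rw [whithamF_eq hx]
      have h1 := one_le_whithamG hx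
      calc (1 : ℝ) = Real.sqrt 1 := by simp
        _ ≤ Real.sqrt (whithamG x) := Real.sqrt_le_sqrt h1
  · intro y hy
    have hy1 : (1 : ℝ) ≤ y := hy
    set b : ℝ := max 1 (4 * y ^ 2) with hb
    have hb1 : (1 : ℝ) ≤ b := le_max_left _ _
    have hb0 : (0 : ℝ) < b := by linarith
    have hbne : b ≠ 0 := hb0.ne'
    have hgb : y ^ 2 ≤ whithamG b := by
      have htanh := tanh_ge_half hb1
      have h4y : 4 * y ^ 2 ≤ b := le_max_right _ _
      unfold whithamG
      rw [le_div_iff₀ hb0]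
      nlinarith [sq_nonneg b, sq_nonneg y]
    have hFb : y ≤ whithamF b := by
      rw [whithamF_eq hbne]
      calc y = Real.sqrt (y ^ 2) := by
              rw [Real.sqrt_sq (by linarith)]
        _ ≤ Real.sqrt (whithamG b) := Real.sqrt_le_sqrt hgb
    have hF0 : whithamF 0 = 1 := by simp [whithamF]
    have := intermediate_value_Icc hb0.le continuous_whithamF.continuousOn
    have hy' : y ∈ Set.Icc (whithamF 0) (whithamF b) := by
      rw [hF0]; exact ⟨hy1, hFb⟩
    obtain ⟨x, _, hx⟩ := this hy'
    exact ⟨x, hx⟩
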